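/- For every nonempty compact set K ⊆ ℝ² and every x ∈ ℝ², the area of the Voronoi flower satisfies Area(F_x(K)) = (1/2) ∫₀^{2π} (max(p_x(K,u_θ), 0))² dθ. In particular, if x ∈ convexHull ℝ K then Area(F_x(K)) = (1/2) ∫₀^{2π} p_x(K,u_θ)² dθ. -/

import Mathlib

open Metric Real Set MeasureTheory
open scoped RealInnerProductSpace

noncomputable section

/-- The Euclidean plane. -/
abbrev E2 := EuclideanSpace ℝ (Fin 2)

/-- The unit vector `u_θ = (cos θ, sin θ)`. -/
def uvec (θ : ℝ) : E2 := (WithLp.equiv 2 (Fin 2 → ℝ)).symm ![Real.cos θ, Real.sin θ]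

/-- The vector `v_θ = (−sin θ, cos θ)`. -/
def vvec (θ : ℝ) : E2 := (WithLp.equiv 2 (Fin 2 → ℝ)).symm ![-Real.sin θ, Real.cos θ]

/-- The Voronoi flower of `L` with respect to `x`: the union over `s ∈ L` of the closed
balls admitting the segment `[x, s]` as a diameter. -/
def vflower (x : E2) (L : Set E2) : Set E2 :=
  ⋃ s ∈ L, closedBall ((2:ℝ)⁻¹ • (x + s)) (‖s - x‖ / 2)

/-- The support function of `L` with respect to `x`: `p_x(L, w) = sup_{s ∈ L} ⟨s − x, w⟩`. -/
def suppf (x : E2) (L : Set E2) (w : E2) : ℝ :=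
  sSup ((fun s => ⟪s - x, w⟫) '' L)

namespace AreaVF

variable {x : E2} {K : Set E2}

lemma inner_cont (x w : E2) : Continuous fun s : E2 => ⟪s - x, w⟫ :=
  (continuous_id.sub continuous_const).inner continuous_const

lemma suppf_le (hKne : K.Nonempty) (hKc : IsCompact K) {w : E2} {c : ℝ}
    (h : ∀ s ∈ K, ⟪s - x, w⟫ ≤ c) : suppf x K w ≤ c := by
  apply csSup_le (hKne.image _)
  rintro a ⟨s, hs, rfl⟩
  exact h s hs

lemma le_suppf (hKc : IsCompact K) {s : E2} (hs : s ∈ K) (w : E2) :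
    ⟪s - x, w⟫ ≤ suppf x K w :=
  le_csSup (hKc.image (inner_cont x w)).bddAbove ⟨s, hs, rfl⟩

lemma suppf_isGreatest (hKne : K.Nonempty) (hKc : IsCompact K) (w : E2) :
    ∃ s ∈ K, IsGreatest ((fun s => ⟪s - x, w⟫) '' K) ⟪s - x, w⟫ := by
  obtain ⟨s, hs, hmax⟩ := hKc.exists_isMaxOn hKne (inner_cont x w).continuousOn
  refine ⟨s, hs, mem_image_of_mem _ hs, ?_⟩
  rintro a ⟨t, ht, rfl⟩
  exact hmax ht

lemma suppf_exists_eq (hKne : K.Nonempty) (hKc : IsCompact K) (w : E2) :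
    ∃ s ∈ K, suppf x K w = ⟪s - x, w⟫ := by
  obtain ⟨s, hs, hg⟩ := suppf_isGreatest (x := x) hKne hKc w
  exact ⟨s, hs, hg.csSup_eq⟩

lemma suppf_smul (hKne : K.Nonempty) (hKc : IsCompact K) (w : E2) {c : ℝ} (hc : 0 ≤ c) :
    suppf x K (c • w) = c * suppf x K w := by
  obtain ⟨s, hs, hg⟩ := suppf_isGreatest (x := x) hKne hKc w
  have h1 : IsGreatest ((fun s => ⟪s - x, c • w⟫) '' K) (c * ⟪s - x, w⟫) := by
    constructor
    · exact ⟨s, hs, real_inner_smul_right _ _ _⟩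
    · rintro a ⟨t, ht, rfl⟩
      show ⟪t - x, c • w⟫ ≤ c * ⟪s - x, w⟫
      rw [real_inner_smul_right]
      exact mul_le_mul_of_nonneg_left (hg.2 (mem_image_of_mem _ ht)) hc
  rw [suppf, h1.csSup_eq, suppf, hg.csSup_eq]

lemma suppf_nonneg (hKc : IsCompact K) (hx : x ∈ convexHull ℝ K) (w : E2) :
    0 ≤ suppf x K w := by
  set c := suppf x K w with hc
  have hlin : IsLinearMap ℝ (fun y : E2 => ⟪y, w⟫) :=
    ⟨fun a b => inner_add_left a b w, fun r y => real_inner_smul_left y w r⟩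
  have hconv : Convex ℝ {y : E2 | ⟪y, w⟫ ≤ c + ⟪x, w⟫} := convex_halfSpace_le hlin _
  have hK : K ⊆ {y : E2 | ⟪y, w⟫ ≤ c + ⟪x, w⟫} := by
    intro s hs
    have := le_suppf (x := x) hKc hs w
    simp only [mem_setOf_eq]
    rw [inner_sub_left] at this
    linarith
  have hxmem : x ∈ {y : E2 | ⟪y, w⟫ ≤ c + ⟪x, w⟫} := convexHull_min hK hconv hx
  simp only [mem_setOf_eq] at hxmem
  linarith

lemma suppf_continuous (hKne : K.Nonempty) (hKc : IsCompact K) {M : ℝ}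
    (hM : ∀ s ∈ K, ‖s - x‖ ≤ M) : Continuous (suppf x K) := by
  have hM0 : 0 ≤ M := le_trans (norm_nonneg _) (hM _ hKne.some_mem)
  have key : ∀ w w' : E2, suppf x K w ≤ suppf x K w' + M * ‖w - w'‖ := by
    intro w w'
    apply suppf_le hKne hKc
    intro s hs
    have h1 : ⟪s - x, w⟫ = ⟪s - x, w'⟫ + ⟪s - x, w - w'⟫ := by
      rw [← inner_add_right]; congr 1; abel
    have h2 : ⟪s - x, w - w'⟫ ≤ ‖s - x‖ * ‖w - w'‖ := real_inner_le_norm _ _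
    have h3 : ‖s - x‖ * ‖w - w'‖ ≤ M * ‖w - w'‖ :=
      mul_le_mul_of_nonneg_right (hM s hs) (norm_nonneg _)
    have h4 := le_suppf (x := x) hKc hs w'
    linarith
  have : LipschitzWith M.toNNReal (suppf x K) := by
    apply LipschitzWith.of_dist_le_mul
    intro w w'
    rw [Real.dist_eq, abs_le]
    have k1 := key w w'
    have k2 := key w' w
    have hd : dist w w' = ‖w - w'‖ := dist_eq_norm _ _
    have hd' : ‖w' - w‖ = ‖w - w'‖ := norm_sub_rev _ _
    have hcoe : (M.toNNReal : ℝ) = max M 0 := Real.coe_toNNReal' M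
    have hmax : M ≤ max M 0 := le_max_left _ _
    have hn : (0:ℝ) ≤ ‖w - w'‖ := norm_nonneg _
    constructor <;> nlinarith [mul_le_mul_of_nonneg_right hmax hn]
  exact this.continuous

lemma mem_vflower_iff (hKne : K.Nonempty) (hKc : IsCompact K) (y : E2) :
    y ∈ vflower x K ↔ ‖y - x‖ ^ 2 ≤ suppf x K (y - x) := by
  constructor
  · intro hy
    simp only [vflower, mem_iUnion, exists_prop] at hy
    obtain ⟨s, hs, hball⟩ := hy
    rw [mem_closedBall, dist_eq_norm] at hball
    have h3 : y - (2:ℝ)⁻¹ • (x + s) = (y - x) - (2:ℝ)⁻¹ • (s - x) := by module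
    rw [h3] at hball
    have h2 : ‖(y - x) - (2:ℝ)⁻¹ • (s - x)‖ ^ 2 ≤ (‖s - x‖ / 2) ^ 2 :=
      pow_le_pow_left₀ (norm_nonneg _) hball 2
    have h4 : ‖(y - x) - (2:ℝ)⁻¹ • (s - x)‖ ^ 2
        = ‖y - x‖ ^ 2 - 2 * ⟪y - x, (2:ℝ)⁻¹ • (s - x)⟫ + ‖(2:ℝ)⁻¹ • (s - x)‖ ^ 2 :=
      norm_sub_sq_real _ _
    rw [real_inner_smul_right, norm_smul, Real.norm_eq_abs] at h4
    have h5 : ‖y - x‖ ^ 2 ≤ ⟪y - x, s - x⟫ := by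
      rw [abs_of_pos (by norm_num : (0:ℝ) < (2:ℝ)⁻¹)] at h4
      nlinarith [norm_nonneg (s - x)]
    rw [real_inner_comm] at h5
    exact h5.trans (le_suppf hKc hs _)
  · intro hy
    obtain ⟨s, hs, heq⟩ := suppf_exists_eq (x := x) hKne hKc (y - x)
    rw [heq] at hy
    simp only [vflower, mem_iUnion, exists_prop]
    refine ⟨s, hs, ?_⟩
    rw [mem_closedBall, dist_eq_norm]
    have h3 : y - (2:ℝ)⁻¹ • (x + s) = (y - x) - (2:ℝ)⁻¹ • (s - x) := by module
    rw [h3]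
    have h4 : ‖(y - x) - (2:ℝ)⁻¹ • (s - x)‖ ^ 2
        = ‖y - x‖ ^ 2 - 2 * ⟪y - x, (2:ℝ)⁻¹ • (s - x)⟫ + ‖(2:ℝ)⁻¹ • (s - x)‖ ^ 2 :=
      norm_sub_sq_real _ _
    rw [real_inner_smul_right, norm_smul, Real.norm_eq_abs,
      abs_of_pos (by norm_num : (0:ℝ) < (2:ℝ)⁻¹)] at h4
    rw [real_inner_comm] at hy
    have h5 : ‖(y - x) - (2:ℝ)⁻¹ • (s - x)‖ ^ 2 ≤ (‖s - x‖ / 2) ^ 2 := by nlinarith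
    calc ‖(y - x) - (2:ℝ)⁻¹ • (s - x)‖
        = Real.sqrt (‖(y - x) - (2:ℝ)⁻¹ • (s - x)‖ ^ 2) := (Real.sqrt_sq (norm_nonneg _)).symm
      _ ≤ Real.sqrt ((‖s - x‖ / 2) ^ 2) := Real.sqrt_le_sqrt h5
      _ = ‖s - x‖ / 2 := Real.sqrt_sq (by positivity)

/-- The map `(a, b) ↦ (a, b)` from `ℝ × ℝ` to the Euclidean plane. -/
def φ : ℝ × ℝ → E2 := fun p => (WithLp.equiv 2 (Fin 2 → ℝ)).symm ![p.1, p.2]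

lemma φ_measurePreserving : MeasurePreserving φ volume volume :=
  ((EuclideanSpace.volume_preserving_symm_measurableEquiv_toLp (Fin 2)).symm).comp
    ((volume_preserving_finTwoArrow ℝ).symm)

lemma φ_continuous : Continuous φ := by
  have : Continuous fun p : ℝ × ℝ => (![p.1, p.2] : Fin 2 → ℝ) := by
    apply continuous_pi
    intro i
    fin_cases i
    · exact continuous_fst
    · exact continuous_snd
  exact (PiLp.continuous_toLp 2 (fun _ : Fin 2 => ℝ)).comp this

lemma norm_uvec_sq (θ : ℝ) : ‖uvec θ‖ ^ 2 = 1 := by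
  rw [EuclideanSpace.norm_sq_eq]
  simp [uvec, Fin.sum_univ_two]

lemma φ_polar (r θ : ℝ) : φ (r * Real.cos θ, r * Real.sin θ) = r • uvec θ := by
  simp only [φ, uvec]
  rw [← WithLp.toLp_smul]
  congr 1
  simp [Matrix.smul_cons]

lemma norm_φ_sq (p : ℝ × ℝ) : ‖φ p‖ ^ 2 = p.1 ^ 2 + p.2 ^ 2 := by
  rw [EuclideanSpace.norm_sq_eq]
  simp [φ, Fin.sum_univ_two]

end AreaVF

open AreaVF

/-- the area of the Voronoi flower as an integral of the squared (truncated)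
support function, and the simplification when `x` lies in the convex hull of `K`. -/
theorem area_vflower (K : Set E2) (hKne : K.Nonempty) (hKc : IsCompact K) (x : E2) :
    volume (vflower x K)
      = ENNReal.ofReal ((1/2) * ∫ θ in (0:ℝ)..(2*π), (max (suppf x K (uvec θ)) 0) ^ 2) ∧
    (x ∈ convexHull ℝ K →
      volume (vflower x K)
        = ENNReal.ofReal ((1/2) * ∫ θ in (0:ℝ)..(2*π), (suppf x K (uvec θ)) ^ 2)) := by
  -- a bound on K
  obtain ⟨M₀, hM₀⟩ := hKc.isBounded.subset_closedBall x
  set M : ℝ := max M₀ 0 with hMdef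
  have hM0 : 0 ≤ M := le_max_right _ _
  have hM : ∀ s ∈ K, ‖s - x‖ ≤ M := by
    intro s hs
    have := hM₀ hs
    rw [mem_closedBall, dist_eq_norm] at this
    exact this.trans (le_max_left _ _)
  have hq_cont : Continuous (suppf x K) := suppf_continuous hKne hKc hM
  have hq_le : ∀ w : E2, suppf x K w ≤ M * ‖w‖ := by
    intro w
    apply suppf_le hKne hKc
    intro s hs
    exact (real_inner_le_norm _ _).trans
      (mul_le_mul_of_nonneg_right (hM s hs) (norm_nonneg _))
  -- the translated flower
  set A : Set E2 := {z : E2 | ‖z‖ ^ 2 ≤ suppf x K z} with hAdef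
  have hAclosed : IsClosed A := by
    have : A = {z : E2 | ‖z‖ ^ 2 - suppf x K z ≤ 0} := by
      ext z; simp [hAdef, sub_nonpos]
    rw [this]
    exact isClosed_le ((continuous_norm.pow 2).sub hq_cont) continuous_const
  have hAmeas : MeasurableSet A := hAclosed.measurableSet
  have hAbdd : ∀ z ∈ A, ‖z‖ ≤ M := by
    intro z hz
    have h1 : ‖z‖ ^ 2 ≤ M * ‖z‖ := hz.trans (hq_le z)
    nlinarith [norm_nonneg z]
  have hFA : vflower x K = (fun y => y - x) ⁻¹' A := by
    ext y
    rw [mem_preimage]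
    exact mem_vflower_iff hKne hKc y
  have hvol1 : volume (vflower x K) = volume A := by
    rw [hFA]
    have : (fun y : E2 => y - x) = fun y => y + (-x) := by funext y; rw [sub_eq_add_neg]
    rw [this]
    exact measure_preimage_add_right volume (-x) A
  -- move to ℝ × ℝ
  set B : Set (ℝ × ℝ) := φ ⁻¹' A with hBdef
  have hBmeas : MeasurableSet B := φ_continuous.measurable hAmeas
  have hvol2 : volume A = volume B :=
    (φ_measurePreserving.measure_preimage hAmeas.nullMeasurableSet).symm
  have hBbdd : ∀ p ∈ B, |p.1| ≤ M ∧ |p.2| ≤ M := by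
    intro p hp
    have h1 : ‖φ p‖ ≤ M := hAbdd _ hp
    have h2 : p.1 ^ 2 + p.2 ^ 2 ≤ M ^ 2 := by
      rw [← norm_φ_sq]
      nlinarith [norm_nonneg (φ p)]
    constructor <;> (rw [abs_le]; constructor <;> nlinarith)
  have hBfin : volume B < ⊤ := by
    have hsub : B ⊆ Icc (-M) M ×ˢ Icc (-M) M := by
      rintro ⟨a, b⟩ hp
      obtain ⟨h1, h2⟩ := hBbdd _ hp
      rw [abs_le] at h1 h2
      exact ⟨⟨h1.1, h1.2⟩, ⟨h2.1, h2.2⟩⟩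
    calc volume B ≤ volume (Icc (-M) M ×ˢ Icc (-M) M) := measure_mono hsub
      _ < ⊤ := by
          rw [MeasureTheory.Measure.volume_eq_prod, MeasureTheory.Measure.prod_prod]
          exact ENNReal.mul_lt_top (by simp [Real.volume_Icc]) (by simp [Real.volume_Icc])
  -- membership in polar form
  set p : ℝ → ℝ := fun θ => suppf x K (uvec θ) with hpdef
  have hp_cont : Continuous p := hq_cont.comp (by
    have : Continuous uvec := by
      apply (PiLp.continuous_toLp 2 (fun _ : Fin 2 => ℝ)).comp
      apply continuous_pi
      intro i
      fin_cases i
      · exact Real.continuous_cos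
      · exact Real.continuous_sin
    exact this)
  have hmemB : ∀ r θ : ℝ, 0 < r →
      ((r * Real.cos θ, r * Real.sin θ) ∈ B ↔ r ≤ p θ) := by
    intro r θ hr
    rw [hBdef, mem_preimage, φ_polar, hAdef, mem_setOf_eq]
    have h1 : ‖r • uvec θ‖ ^ 2 = r ^ 2 := by
      rw [norm_smul, mul_pow, Real.norm_eq_abs, sq_abs, norm_uvec_sq, mul_one]
    have h2 : suppf x K (r • uvec θ) = r * p θ := suppf_smul hKne hKc _ hr.le
    rw [h1, h2]
    constructor
    · intro h; nlinarith
    · intro h; nlinarith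
  -- the explicit polar map
  set m : ℝ × ℝ → ℝ × ℝ := fun q => (q.1 * Real.cos q.2, q.1 * Real.sin q.2) with hmdef
  have hm_cont : Continuous m := by fun_prop
  have hm_eq : ∀ q : ℝ × ℝ, polarCoord.symm q = m q := fun q => polarCoord_symm_apply q
  -- the set in polar coordinates
  set T : Set (ℝ × ℝ) := (Ioi (0:ℝ) ×ˢ Ioo (-π) π) ∩ m ⁻¹' B with hTdef
  have hTmeas : MeasurableSet T :=
    (measurableSet_Ioi.prod measurableSet_Ioo).inter (hm_cont.measurable hBmeas)
  -- compute volume B through polar coordinates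
  have hvol3 : (volume B).toReal = ∫ q : ℝ × ℝ, B.indicator 1 q := by
    rw [integral_indicator_one hBmeas]
    rfl
  have hpolar : (∫ q in polarCoord.target, q.1 • B.indicator (1 : ℝ × ℝ → ℝ) (polarCoord.symm q))
      = ∫ q : ℝ × ℝ, B.indicator 1 q :=
    integral_comp_polarCoord_symm (B.indicator 1)
  have htarget : polarCoord.target = Ioi (0:ℝ) ×ˢ Ioo (-π) π := polarCoord_target
  -- identify the polar integrand with an indicator
  have hg_eq : ∀ q : ℝ × ℝ,
      (Ioi (0:ℝ) ×ˢ Ioo (-π) π).indicator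
        (fun q : ℝ × ℝ => q.1 • B.indicator (1 : ℝ × ℝ → ℝ) (polarCoord.symm q)) q
      = T.indicator (fun q : ℝ × ℝ => q.1) q := by
    intro q
    by_cases h1 : q ∈ Ioi (0:ℝ) ×ˢ Ioo (-π) π
    · rw [indicator_of_mem h1]
      by_cases h2 : m q ∈ B
      · have hqT : q ∈ T := ⟨h1, h2⟩
        rw [indicator_of_mem hqT, hm_eq, indicator_of_mem h2]
        simp
      · have hqT : q ∉ T := fun h => h2 h.2
        rw [indicator_of_notMem hqT, hm_eq, indicator_of_notMem h2]
        simp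
    · have hqT : q ∉ T := fun h => h1 h.1
      rw [indicator_of_notMem h1, indicator_of_notMem hqT]
  have hsetint : (∫ q in polarCoord.target, q.1 • B.indicator (1 : ℝ × ℝ → ℝ) (polarCoord.symm q))
      = ∫ q : ℝ × ℝ, T.indicator (fun q : ℝ × ℝ => q.1) q := by
    rw [htarget, ← integral_indicator (measurableSet_Ioi.prod measurableSet_Ioo)]
    exact integral_congr_ae (Filter.Eventually.of_forall hg_eq)
  -- integrability of the indicator
  have hTsub : T ⊆ Ioc (0:ℝ) M ×ˢ Ioo (-π) π := by
    rintro ⟨r, θ⟩ ⟨⟨hr, hθ⟩, hB⟩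
    have hr' : (0:ℝ) < r := hr
    have := (hBbdd _ hB).1
    simp only [hmdef] at this
    have hrM : r ≤ M := by
      have h2 : ‖φ (m (r, θ))‖ ≤ M := hAbdd _ hB
      have h3 : ‖φ (m (r, θ))‖ ^ 2 = r ^ 2 := by
        show ‖φ (r * Real.cos θ, r * Real.sin θ)‖ ^ 2 = r ^ 2
        rw [φ_polar, norm_smul, mul_pow, Real.norm_eq_abs, sq_abs, norm_uvec_sq, mul_one]
      nlinarith [norm_nonneg (φ (m (r, θ)))]
    exact ⟨⟨hr', hrM⟩, hθ⟩
  have hT_int : Integrable (T.indicator (fun q : ℝ × ℝ => q.1)) volume := by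
    have hmeas : AEStronglyMeasurable (T.indicator (fun q : ℝ × ℝ => q.1)) volume :=
      ((measurable_fst.indicator hTmeas).aestronglyMeasurable)
    have hbd_int : Integrable ((Ioc (0:ℝ) M ×ˢ Ioo (-π) π).indicator fun _ => M) volume := by
      rw [integrable_indicator_iff (measurableSet_Ioc.prod measurableSet_Ioo)]
      refine integrableOn_const ?_ enorm_ne_top
      apply LT.lt.ne
      rw [MeasureTheory.Measure.volume_eq_prod, MeasureTheory.Measure.prod_prod]
      exact ENNReal.mul_lt_top (by simp [Real.volume_Ioc]) (by simp [Real.volume_Ioo])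
    apply Integrable.mono' hbd_int hmeas
    apply Filter.Eventually.of_forall
    intro q
    by_cases hq : q ∈ T
    · rw [indicator_of_mem hq, indicator_of_mem (hTsub hq), Real.norm_eq_abs,
        abs_of_pos (hTsub hq).1.1]
      exact (hTsub hq).1.2
    · rw [indicator_of_notMem hq]
      simp only [norm_zero]
      exact indicator_nonneg (fun _ _ => hM0) _
  -- Fubini
  have hfub : (∫ q : ℝ × ℝ, T.indicator (fun q : ℝ × ℝ => q.1) q)
      = ∫ θ : ℝ, ∫ r : ℝ, T.indicator (fun q : ℝ × ℝ => q.1) (r, θ) := by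
    rw [MeasureTheory.Measure.volume_eq_prod] at hT_int ⊢
    exact MeasureTheory.integral_prod_symm _ hT_int
  -- inner integral
  have hinner : ∀ θ : ℝ, (∫ r : ℝ, T.indicator (fun q : ℝ × ℝ => q.1) (r, θ))
      = (Ioo (-π) π).indicator (fun θ => (max (p θ) 0) ^ 2 / 2) θ := by
    intro θ
    by_cases hθ : θ ∈ Ioo (-π) π
    · have hfun : ∀ r : ℝ, T.indicator (fun q : ℝ × ℝ => q.1) (r, θ)
          = (Ioc (0:ℝ) (p θ)).indicator (fun r => r) r := by
        intro r
        by_cases hr : r ∈ Ioc (0:ℝ) (p θ)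
        · have hT' : (r, θ) ∈ T := by
            refine ⟨⟨hr.1, hθ⟩, ?_⟩
            show (r * Real.cos θ, r * Real.sin θ) ∈ B
            exact (hmemB r θ hr.1).2 hr.2
          rw [indicator_of_mem hT', indicator_of_mem hr]
        · have hT' : (r, θ) ∉ T := by
            rintro ⟨⟨hr1, _⟩, hB⟩
            have hr1' : (0:ℝ) < r := hr1
            have : r ≤ p θ := (hmemB r θ hr1').1 hB
            exact hr ⟨hr1', this⟩
          rw [indicator_of_notMem hT', indicator_of_notMem hr]
      simp_rw [hfun]
      rw [integral_indicator measurableSet_Ioc, indicator_of_mem hθ]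
      by_cases hpθ : 0 ≤ p θ
      · rw [← intervalIntegral.integral_of_le hpθ, integral_id,
          max_eq_left hpθ]
        ring
      · push_neg at hpθ
        rw [Ioc_eq_empty (by linarith), max_eq_right hpθ.le]
        simp
    · have hfun : ∀ r : ℝ, T.indicator (fun q : ℝ × ℝ => q.1) (r, θ) = 0 := by
        intro r
        apply indicator_of_notMem
        rintro ⟨⟨_, hθ'⟩, _⟩
        exact hθ hθ'
      simp_rw [hfun]
      rw [indicator_of_notMem hθ]
      simp
  -- outer integral
  have houter : (∫ θ : ℝ, ∫ r : ℝ, T.indicator (fun q : ℝ × ℝ => q.1) (r, θ))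
      = ∫ θ in (-π)..π, (max (p θ) 0) ^ 2 / 2 := by
    simp_rw [hinner]
    rw [integral_indicator measurableSet_Ioo,
      ← MeasureTheory.integral_Ioc_eq_integral_Ioo,
      ← intervalIntegral.integral_of_le (by linarith [Real.pi_pos] : -π ≤ π)]
  -- periodicity
  have hper : Function.Periodic (fun θ => (max (p θ) 0) ^ 2 / 2) (2 * π) := by
    intro θ
    have : p (θ + 2 * π) = p θ := by
      simp only [hpdef]
      congr 1
      simp only [uvec]
      congr 1
      rw [Real.cos_add_two_pi, Real.sin_add_two_pi]
    simp [this]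
  have hshift : (∫ θ in (-π)..π, (max (p θ) 0) ^ 2 / 2)
      = ∫ θ in (0:ℝ)..(2*π), (max (p θ) 0) ^ 2 / 2 := by
    have h1 := hper.intervalIntegral_add_eq (-π) 0
    have h2 : -π + 2 * π = π := by ring
    have h3 : (0:ℝ) + 2 * π = 2 * π := by ring
    rw [h2, h3] at h1
    exact h1
  -- assemble
  have main : volume (vflower x K)
      = ENNReal.ofReal ((1/2) * ∫ θ in (0:ℝ)..(2*π), (max (suppf x K (uvec θ)) 0) ^ 2) := by
    have hhalf : (1/2) * (∫ θ in (0:ℝ)..(2*π), (max (p θ) 0) ^ 2)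
        = ∫ θ in (0:ℝ)..(2*π), (max (p θ) 0) ^ 2 / 2 := by
      rw [intervalIntegral.integral_div]
      ring
    have hBval : volume B = ENNReal.ofReal
        ((1/2) * ∫ θ in (0:ℝ)..(2*π), (max (p θ) 0) ^ 2) := by
      rw [hhalf, ← hshift, ← houter, ← hfub, ← hsetint, hpolar, ← hvol3]
      exact (ENNReal.ofReal_toReal hBfin.ne).symm
    rw [hvol1, hvol2, hBval]
  refine ⟨main, fun hx => ?_⟩
  have heq : (∫ θ in (0:ℝ)..(2*π), (suppf x K (uvec θ)) ^ 2)
      = ∫ θ in (0:ℝ)..(2*π), (max (suppf x K (uvec θ)) 0) ^ 2 := by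
    apply intervalIntegral.integral_congr
    intro θ _
    show (suppf x K (uvec θ)) ^ 2 = (max (suppf x K (uvec θ)) 0) ^ 2
    rw [max_eq_left (suppf_nonneg hKc hx _)]
  rw [heq]
  exact main
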